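/- Let F = Σ_k F_k be the unique solution of F = Σ_{i=1}^n C(n,i)·F^{⧢ i}·a_i + a_0 in noncommutative series on {a_0,...,a_n}, where F_k is the degree-k homogeneous part. Then the total coefficient mass ‖F_k‖ = Σ_v |⟨F_k, v⟩| equals ((n−1)(k−1)+1)·((n−1)(k−2)+1)···n for k ≥ 1, ‖F_1‖ = 1, and ‖F_0‖ = 0. In particular, for n=2, ‖F_k‖ = k!; for n=3, ‖F_k‖ = (2k−1)!!. -/

import Mathlib

/-- The subword of `w` consisting of the positions in `s` (in order). -/
def extract {α : Type*} (w : List α) (s : Finset ℕ) : List α :=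
  (w.zipIdx.filter fun p => p.2 ∈ s).map Prod.fst

/-- The coefficient of a word `w` in the shuffle product of two noncommutative series. -/
noncomputable def shuffleCoeff {α : Type*} (S T : List α → ℝ) (w : List α) : ℝ :=
  ∑ s ∈ (Finset.range w.length).powerset,
    S (extract w s) * T (extract w (Finset.range w.length \ s))

/-- Coefficients of the `i`-fold shuffle power `S^{⧢ i}` of a series. -/
noncomputable def shufflePowCoeff {α : Type*} [DecidableEq α] (S : List α → ℝ) :
    ℕ → List α → ℝ
  | 0 => fun w => if w = [] then 1 else 0
  | k + 1 => shuffleCoeff S (shufflePowCoeff S k)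

namespace Stmt10Aux

open Finset

/-! ### extract lemmas -/

lemma snd_map_succ {α : Type*} :
    Prod.snd ∘ Prod.map (· + 1) (id : α → α) = Prod.snd := funext fun _ => rfl

lemma fst_map_succ {α : Type*} :
    Prod.fst ∘ Prod.map (id : α → α) (· + 1) = Prod.fst := funext fun _ => rfl

lemma extract_cons_image {α : Type*} (a : α) (w : List α) (u : Finset ℕ) :
    extract (a :: w) (u.image (· + 1)) = extract w u := by
  simp only [extract, List.zipIdx_cons', List.filter_cons, List.filter_map]
  rw [if_neg (by simp), List.map_map, fst_map_succ]
  congr 1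
  apply List.filter_congr
  intro p _
  simp [Prod.map]

lemma extract_cons_insert {α : Type*} (a : α) (w : List α) (u : Finset ℕ) :
    extract (a :: w) (insert 0 (u.image (· + 1))) = a :: extract w u := by
  simp only [extract, List.zipIdx_cons', List.filter_cons, List.filter_map]
  rw [if_pos (by simp), List.map_cons, List.map_map, fst_map_succ]
  congr 2
  apply List.filter_congr
  intro p _
  simp [Prod.map]

lemma range_succ_eq (m : ℕ) : range (m + 1) = insert 0 ((range m).image (· + 1)) := by
  ext x; cases x <;> simp

lemma compl_image (m : ℕ) (u : Finset ℕ) :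
    range (m + 1) \ (u.image (· + 1)) = insert 0 ((range m \ u).image (· + 1)) := by
  ext x; cases x <;> simp

lemma compl_insert (m : ℕ) (u : Finset ℕ) :
    range (m + 1) \ insert 0 (u.image (· + 1)) = (range m \ u).image (· + 1) := by
  ext x; cases x <;> simp

lemma image_pred_succ {t X : Finset ℕ} (ht : t ⊆ X.image (· + 1)) :
    (t.image (· - 1)).image (· + 1) = t := by
  ext x
  simp only [mem_image]
  constructor
  · rintro ⟨y, ⟨z, hz, rfl⟩, rfl⟩
    have := ht hz
    simp only [mem_image] at this
    obtain ⟨v, _, rfl⟩ := this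
    simpa using hz
  · intro hx
    have := ht hx
    simp only [mem_image] at this
    obtain ⟨v, _, rfl⟩ := this
    exact ⟨v, ⟨v + 1, hx, rfl⟩, rfl⟩

lemma sum_powerset_image_succ (X : Finset ℕ) (f : Finset ℕ → ℝ) :
    ∑ t ∈ (X.image (· + 1)).powerset, f t = ∑ u ∈ X.powerset, f (u.image (· + 1)) := by
  apply Finset.sum_nbij' (i := fun t => t.image (· - 1)) (j := fun u => u.image (· + 1))
  · intro t ht
    simp only [mem_powerset] at *
    intro x hx
    simp only [mem_image] at hx
    obtain ⟨y, hy, rfl⟩ := hx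
    have := ht hy
    simp only [mem_image] at this
    obtain ⟨z, hz, rfl⟩ := this
    simpa using hz
  · intro u hu
    simp only [mem_powerset] at *
    exact Finset.image_subset_image hu
  · intro t ht
    exact image_pred_succ (mem_powerset.mp ht)
  · intro u hu
    ext x
    simp only [mem_image]
    constructor
    · rintro ⟨y, ⟨z, hz, rfl⟩, rfl⟩; simpa using hz
    · intro hx; exact ⟨x + 1, ⟨x, hx, rfl⟩, rfl⟩
  · intro t ht
    rw [image_pred_succ (mem_powerset.mp ht)]

/-! ### shuffleCoeff recursion -/

lemma shuffleCoeff_nil {α : Type*} (S T : List α → ℝ) :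
    shuffleCoeff S T [] = S [] * T [] := by
  simp [shuffleCoeff, extract]

lemma shuffleCoeff_cons {α : Type*} (S T : List α → ℝ) (a : α) (w : List α) :
    shuffleCoeff S T (a :: w) =
      shuffleCoeff (fun u => S (a :: u)) T w + shuffleCoeff S (fun u => T (a :: u)) w := by
  have h0 : (0 : ℕ) ∉ (range w.length).image (· + 1) := by simp
  rw [shuffleCoeff, List.length_cons, range_succ_eq, Finset.sum_powerset_insert h0,
    sum_powerset_image_succ, sum_powerset_image_succ]
  rw [add_comm]
  congr 1
  · apply Finset.sum_congr rfl
    intro u hu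
    rw [← range_succ_eq, compl_insert, extract_cons_image, extract_cons_insert]
  · apply Finset.sum_congr rfl
    intro u hu
    rw [← range_succ_eq, compl_image, extract_cons_image, extract_cons_insert]

/-! ### binomial convolution helper -/

lemma binom_conv (u v : ℕ → ℝ) (m : ℕ) :
    ∑ j ∈ range (m + 2), ((m + 1).choose j : ℝ) * (u j * v (m + 1 - j))
      = ∑ j ∈ range (m + 1), (m.choose j : ℝ) * (u (j + 1) * v (m - j))
        + ∑ j ∈ range (m + 1), (m.choose j : ℝ) * (u j * v (m + 1 - j)) := by
  set f : ℕ → ℝ := fun j => ((m + 1).choose j : ℝ) * (u j * v (m + 1 - j)) with hf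
  set g : ℕ → ℝ := fun j => (m.choose j : ℝ) * (u j * v (m + 1 - j)) with hg
  have key : ∀ j ∈ range (m + 1),
      f (j + 1) = (m.choose j : ℝ) * (u (j + 1) * v (m - j)) + g (j + 1) := by
    intro j _
    simp only [hf, hg, Nat.choose_succ_succ, Nat.succ_sub_succ]
    push_cast
    ring
  calc ∑ j ∈ range (m + 2), f j = ∑ j ∈ range (m + 1), f (j + 1) + f 0 :=
        Finset.sum_range_succ' f (m + 1)
    _ = ∑ j ∈ range (m + 1), ((m.choose j : ℝ) * (u (j + 1) * v (m - j)) + g (j + 1)) + g 0 := by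
        rw [Finset.sum_congr rfl key]; simp [hf, hg]
    _ = ∑ j ∈ range (m + 1), (m.choose j : ℝ) * (u (j + 1) * v (m - j))
          + (∑ j ∈ range (m + 1), g (j + 1) + g 0) := by
        rw [Finset.sum_add_distrib]; ring
    _ = ∑ j ∈ range (m + 1), (m.choose j : ℝ) * (u (j + 1) * v (m - j))
          + ∑ j ∈ range (m + 1), g j := by
        rw [← Finset.sum_range_succ' g (m + 1), Finset.sum_range_succ g (m + 1)]
        simp [hg, Nat.choose_succ_self]

/-! ### sums over words -/

noncomputable def wsum {α : Type*} [Fintype α] (S : List α → ℝ) (m : ℕ) : ℝ :=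
  ∑ f : Fin m → α, S (List.ofFn f)

lemma wsum_zero {α : Type*} [Fintype α] (S : List α → ℝ) : wsum S 0 = S [] := by
  simp [wsum]

lemma wsum_succ {α : Type*} [Fintype α] (S : List α → ℝ) (m : ℕ) :
    wsum S (m + 1) = ∑ a : α, wsum (fun u => S (a :: u)) m := by
  rw [wsum, ← (Fin.consEquiv (fun _ : Fin (m + 1) => α)).sum_comp (fun f => S (List.ofFn f))]
  rw [Fintype.sum_prod_type]
  apply Finset.sum_congr rfl
  intro a _
  apply Finset.sum_congr rfl
  intro g _
  simp [List.ofFn_succ, Fin.consEquiv]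

lemma wsum_add {α : Type*} [Fintype α] (S T : List α → ℝ) (m : ℕ) :
    wsum (fun u => S u + T u) m = wsum S m + wsum T m := by
  simp [wsum, Finset.sum_add_distrib]

lemma KL {α : Type*} [Fintype α] (m : ℕ) :
    ∀ S T : List α → ℝ, wsum (shuffleCoeff S T) m
      = ∑ j ∈ range (m + 1), (m.choose j : ℝ) * (wsum S j * wsum T (m - j)) := by
  induction m with
  | zero =>
    intro S T
    simp [wsum_zero, shuffleCoeff_nil]
  | succ m ih =>
    intro S T
    rw [wsum_succ]
    have step : ∀ a : α, wsum (fun u => shuffleCoeff S T (a :: u)) m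
        = ∑ j ∈ range (m + 1), (m.choose j : ℝ) *
            (wsum (fun u => S (a :: u)) j * wsum T (m - j))
          + ∑ j ∈ range (m + 1), (m.choose j : ℝ) *
            (wsum S j * wsum (fun u => T (a :: u)) (m - j)) := by
      intro a
      have : (fun u => shuffleCoeff S T (a :: u))
          = fun u => shuffleCoeff (fun v => S (a :: v)) T u
              + shuffleCoeff S (fun v => T (a :: v)) u := by
        funext u; exact shuffleCoeff_cons S T a u
      rw [this, wsum_add, ih, ih]
    rw [Finset.sum_congr rfl (fun a _ => step a), Finset.sum_add_distrib]
    rw [show m + 1 + 1 = m + 2 from rfl, binom_conv (wsum S) (wsum T) m]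
    congr 1
    · rw [Finset.sum_comm]
      apply Finset.sum_congr rfl
      intro j _
      rw [← Finset.mul_sum, ← Finset.sum_mul, ← wsum_succ]
    · rw [Finset.sum_comm]
      apply Finset.sum_congr rfl
      intro j hj
      have hj' := Finset.mem_range.mp hj
      rw [← Finset.mul_sum, ← Finset.mul_sum, ← wsum_succ,
        show m - j + 1 = m + 1 - j by omega]

/-! ### arithmetic: the products and alternating sums -/

noncomputable def Pp (c x : ℝ) (k : ℕ) : ℝ := ∏ l ∈ range k, (c * l + x)

noncomputable def qq (c : ℝ) (i k : ℕ) : ℝ :=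
  ∑ j ∈ range (i + 1), (-1 : ℝ) ^ (i + j) * (i.choose j : ℝ) * Pp c j k

lemma Pp_zero_right (c x : ℝ) : Pp c x 0 = 1 := by simp [Pp]

lemma Pp_succ (c x : ℝ) (k : ℕ) : Pp c x (k + 1) = Pp c x k * (c * k + x) :=
  Finset.prod_range_succ _ _

lemma Pp_x_zero (c : ℝ) (k : ℕ) : Pp c 0 k = if k = 0 then 1 else 0 := by
  cases k with
  | zero => simp [Pp]
  | succ k =>
    rw [Pp, Finset.prod_range_succ' (fun l => c * l + 0)]
    simp

lemma B_conv (c : ℝ) : ∀ (k : ℕ) (x : ℝ),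
    ∑ a ∈ range (k + 1), (k.choose a : ℝ) * (Pp c 1 a * Pp c x (k - a)) = Pp c (x + 1) k := by
  intro k
  induction k with
  | zero => intro x; simp [Pp]
  | succ k ih =>
    intro x
    rw [show k + 1 + 1 = k + 2 from rfl, binom_conv (Pp c 1) (Pp c x) k]
    have e1 : ∀ a ∈ range (k + 1),
        (k.choose a : ℝ) * (Pp c 1 (a + 1) * Pp c x (k - a))
          + (k.choose a : ℝ) * (Pp c 1 a * Pp c x (k + 1 - a))
        = ((k.choose a : ℝ) * (Pp c 1 a * Pp c x (k - a))) * (c * k + (x + 1)) := by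
      intro a ha
      have ha' := Nat.lt_succ_iff.mp (Finset.mem_range.mp ha)
      rw [Pp_succ, show k + 1 - a = (k - a) + 1 by omega, Pp_succ]
      have : ((k - a : ℕ) : ℝ) = (k : ℝ) - (a : ℝ) := by
        push_cast [ha']; ring
      rw [this]
      ring
    rw [← Finset.sum_add_distrib, Finset.sum_congr rfl e1, ← Finset.sum_mul, ih x, ← Pp_succ]

lemma q_succ (c : ℝ) (i k : ℕ) :
    qq c (i + 1) k
      = ∑ j ∈ range (i + 1), (-1 : ℝ) ^ (i + j) * (i.choose j : ℝ) * Pp c ((j : ℝ) + 1) k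
        - qq c i k := by
  have key : qq c (i + 1) k
      = ∑ j ∈ range (i + 1),
          ((-1 : ℝ) ^ (i + j) * (i.choose j : ℝ) * Pp c ((j : ℝ) + 1) k
            + (-1 : ℝ) ^ (i + j) * (i.choose (j + 1) : ℝ) * Pp c ((j : ℝ) + 1) k)
        + (-1 : ℝ) ^ (i + 1) * Pp c 0 k := by
    rw [qq, Finset.sum_range_succ'
      (fun j => (-1 : ℝ) ^ (i + 1 + j) * ((i + 1).choose j : ℝ) * Pp c j k) (i + 1)]
    congr 1
    · apply Finset.sum_congr rfl
      intro j _
      rw [Nat.choose_succ_succ]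
      push_cast
      have : (-1 : ℝ) ^ (i + 1 + (j + 1)) = (-1 : ℝ) ^ (i + j) := by
        rw [show i + 1 + (j + 1) = (i + j) + 2 by omega, pow_add]
        simp
      rw [this]
      ring
    · simp
  rw [key, Finset.sum_add_distrib]
  have neg : ∑ j ∈ range (i + 1), (-1 : ℝ) ^ (i + j) * (i.choose (j + 1) : ℝ) * Pp c ((j : ℝ) + 1) k
        + (-1 : ℝ) ^ (i + 1) * Pp c 0 k = - qq c i k := by
    have : - qq c i k = ∑ j ∈ range (i + 1), (-1 : ℝ) ^ (i + 1 + j) * (i.choose j : ℝ) * Pp c j k := by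
      rw [qq, ← Finset.sum_neg_distrib]
      apply Finset.sum_congr rfl
      intro j _
      rw [show i + 1 + j = i + j + 1 from by omega, pow_succ]
      ring
    rw [this, Finset.sum_range_succ'
      (fun j => (-1 : ℝ) ^ (i + 1 + j) * (i.choose j : ℝ) * Pp c j k) i]
    rw [Finset.sum_range_succ
      (fun j => (-1 : ℝ) ^ (i + j) * (i.choose (j + 1) : ℝ) * Pp c ((j : ℝ) + 1) k) i]
    simp only [Nat.choose_succ_self, Nat.cast_zero, mul_zero, zero_mul, add_zero]
    congr 1
    · apply Finset.sum_congr rfl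
      intro j _
      have : (-1 : ℝ) ^ (i + 1 + (j + 1)) = (-1 : ℝ) ^ (i + j) := by
        rw [show i + 1 + (j + 1) = (i + j) + 2 by omega, pow_add]
        simp
      rw [this]
      push_cast
      ring
    · simp
  rw [add_assoc, neg]
  ring

lemma q_zero (c : ℝ) (k : ℕ) : qq c 0 k = if k = 0 then 1 else 0 := by
  simp [qq, Pp_x_zero]

lemma q_conv (c : ℝ) (i k : ℕ) :
    ∑ a ∈ range (k + 1),
        (k.choose a : ℝ) * ((Pp c 1 a - if a = 0 then 1 else 0) * qq c i (k - a))
      = qq c (i + 1) k := by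
  have split : ∀ a ∈ range (k + 1),
      (k.choose a : ℝ) * ((Pp c 1 a - if a = 0 then 1 else 0) * qq c i (k - a))
        = (k.choose a : ℝ) * (Pp c 1 a * qq c i (k - a))
          - (if a = 0 then qq c i k else 0) := by
    intro a _
    by_cases h : a = 0
    · subst h; simp [Pp_zero_right]
    · simp [h]
  rw [Finset.sum_congr rfl split, Finset.sum_sub_distrib, Finset.sum_ite_eq' (range (k + 1))]
  simp only [Finset.mem_range, Nat.lt_add_one_iff, Nat.zero_le, if_true]
  have expand : ∀ a ∈ range (k + 1),
      (k.choose a : ℝ) * (Pp c 1 a * qq c i (k - a))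
        = ∑ j ∈ range (i + 1),
            (-1 : ℝ) ^ (i + j) * (i.choose j : ℝ) * ((k.choose a : ℝ) * (Pp c 1 a * Pp c j (k - a))) := by
    intro a _
    rw [qq, Finset.mul_sum, Finset.mul_sum]
    apply Finset.sum_congr rfl
    intro j _
    ring
  rw [Finset.sum_congr rfl expand, Finset.sum_comm]
  have inner : ∀ j ∈ range (i + 1),
      ∑ a ∈ range (k + 1),
          (-1 : ℝ) ^ (i + j) * (i.choose j : ℝ) * ((k.choose a : ℝ) * (Pp c 1 a * Pp c j (k - a)))
        = (-1 : ℝ) ^ (i + j) * (i.choose j : ℝ) * Pp c ((j : ℝ) + 1) k := by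
    intro j _
    rw [← Finset.mul_sum, B_conv c k (j : ℝ)]
  rw [Finset.sum_congr rfl inner, ← q_succ c i k]

lemma alt_sum (n j : ℕ) (hj : j ≤ n) :
    ∑ i ∈ range (n + 1), (-1 : ℝ) ^ (i + j) * (n.choose i : ℝ) * (i.choose j : ℝ)
      = if j = n then 1 else 0 := by
  have hsplit : n + 1 = j + (n + 1 - j) := by omega
  rw [hsplit, Finset.sum_range_add]
  have first : ∑ i ∈ range j, (-1 : ℝ) ^ (i + j) * (n.choose i : ℝ) * (i.choose j : ℝ) = 0 := by
    apply Finset.sum_eq_zero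
    intro i hi
    rw [Nat.choose_eq_zero_of_lt (Finset.mem_range.mp hi)]
    simp
  rw [first, zero_add]
  have second : ∀ t ∈ range (n + 1 - j),
      (-1 : ℝ) ^ (j + t + j) * (n.choose (j + t) : ℝ) * ((j + t).choose j : ℝ)
        = (n.choose j : ℝ) * ((-1 : ℝ) ^ t * ((n - j).choose t : ℝ)) := by
    intro t ht
    have ht' : j + t ≤ n := by
      have := Finset.mem_range.mp ht; omega
    have hc : n.choose (j + t) * (j + t).choose j = n.choose j * (n - j).choose t := by
      have := Nat.choose_mul (n := n) (k := j + t) (s := j) (Nat.le_add_right j t)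
      simpa using this
    have hsgn : (-1 : ℝ) ^ (j + t + j) = (-1 : ℝ) ^ t := by
      rw [show j + t + j = 2 * j + t by omega, pow_add, pow_mul]
      simp
    rw [hsgn]
    have hcr := congrArg (fun x : ℕ => (x : ℝ)) hc
    push_cast at hcr
    rw [mul_assoc, hcr]
    ring
  rw [Finset.sum_congr rfl second, ← Finset.mul_sum]
  have : ∑ t ∈ range (n + 1 - j), (-1 : ℝ) ^ t * ((n - j).choose t : ℝ)
      = if n - j = 0 then 1 else 0 := by
    have h2 : n + 1 - j = (n - j) + 1 := by omega
    rw [h2]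
    have := Int.alternating_sum_range_choose (n := n - j)
    have := congrArg (fun x : ℤ => (x : ℝ)) this
    push_cast at this
    convert this using 2
  rw [this]
  by_cases h : j = n
  · subst h; simp
  · rw [if_neg h, if_neg (by omega), mul_zero]

lemma C_sum (c : ℝ) (n k : ℕ) :
    ∑ i ∈ range (n + 1), (n.choose i : ℝ) * qq c i k = Pp c n k := by
  have expand : ∀ i ∈ range (n + 1),
      (n.choose i : ℝ) * qq c i k
        = ∑ j ∈ range (n + 1),
            ((-1 : ℝ) ^ (i + j) * (n.choose i : ℝ) * (i.choose j : ℝ)) * Pp c j k := by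
    intro i hi
    have hi' := Nat.lt_add_one_iff.mp (Finset.mem_range.mp hi)
    rw [qq, Finset.mul_sum]
    rw [Finset.sum_subset (Finset.range_subset_range.mpr (by omega : i + 1 ≤ n + 1))]
    · apply Finset.sum_congr rfl
      intro j _
      ring
    · intro j _ hj
      have hij : i + 1 ≤ j := by simpa using Finset.mem_range.not.mp hj
      rw [Nat.choose_eq_zero_of_lt (by omega : i < j)]
      simp
  rw [Finset.sum_congr rfl expand, Finset.sum_comm]
  have inner : ∀ j ∈ range (n + 1),
      ∑ i ∈ range (n + 1), ((-1 : ℝ) ^ (i + j) * (n.choose i : ℝ) * (i.choose j : ℝ)) * Pp c j k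
        = (if j = n then 1 else 0) * Pp c j k := by
    intro j hj
    rw [← Finset.sum_mul, alt_sum n j (Nat.lt_add_one_iff.mp (Finset.mem_range.mp hj))]
  rw [Finset.sum_congr rfl inner]
  simp only [ite_mul, one_mul, zero_mul]
  simp

lemma Pp_shift (c : ℝ) (k : ℕ) : Pp c 1 (k + 1) = Pp c (c + 1) k := by
  rw [Pp, Finset.prod_range_succ' (fun l => c * l + 1)]
  rw [show c * ((0 : ℕ) : ℝ) + 1 = 1 by push_cast; ring, mul_one, Pp]
  apply Finset.prod_congr rfl
  intro l _
  push_cast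
  ring



lemma extract_length_le {α : Type*} (w : List α) (s : Finset ℕ) :
    (extract w s).length ≤ w.length := by
  rw [extract, List.length_map]
  calc (w.zipIdx.filter fun p => p.2 ∈ s).length ≤ w.zipIdx.length := List.length_filter_le _ _
    _ = w.length := List.length_zipIdx

lemma shuffleCoeff_nonneg {α : Type*} {S T : List α → ℝ} {m : ℕ}
    (hS : ∀ u : List α, u.length ≤ m → 0 ≤ S u) (hT : ∀ u : List α, u.length ≤ m → 0 ≤ T u)
    (w : List α) (hw : w.length ≤ m) : 0 ≤ shuffleCoeff S T w := by
  apply Finset.sum_nonneg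
  intro s _
  exact mul_nonneg (hS _ (le_trans (extract_length_le w s) hw))
    (hT _ (le_trans (extract_length_le w _) hw))

lemma shufflePowCoeff_nonneg {α : Type*} [DecidableEq α] {S : List α → ℝ} {m : ℕ}
    (hS : ∀ u : List α, u.length ≤ m → 0 ≤ S u) :
    ∀ (i : ℕ) (w : List α), w.length ≤ m → 0 ≤ shufflePowCoeff S i w := by
  intro i
  induction i with
  | zero => intro w _; simp only [shufflePowCoeff]; positivity
  | succ i ih => intro w hw; exact shuffleCoeff_nonneg hS ih w hw

lemma F_nonneg (n : ℕ) (F : List (Fin (n + 1)) → ℝ)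
    (hF : ∀ w : List (Fin (n + 1)),
      F w = (if w = [(0 : Fin (n + 1))] then 1 else 0) +
        ∑ i ∈ Finset.univ.erase (0 : Fin (n + 1)),
          (n.choose i.val : ℝ) *
            (if w.getLast? = some i then shufflePowCoeff F i.val w.dropLast else 0)) :
    ∀ w, 0 ≤ F w := by
  suffices h : ∀ (m : ℕ) (w : List (Fin (n + 1))), w.length ≤ m → 0 ≤ F w by
    intro w; exact h w.length w le_rfl
  intro m
  induction m with
  | zero =>
    intro w hw
    rw [List.length_eq_zero_iff.mp (Nat.le_zero.mp hw), hF []]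
    simp
  | succ m ih =>
    intro w hw
    rw [hF w]
    apply add_nonneg
    · positivity
    · apply Finset.sum_nonneg
      intro i _
      apply mul_nonneg (by positivity)
      by_cases h : w.getLast? = some i
      · rw [if_pos h]
        apply shufflePowCoeff_nonneg ih
        calc w.dropLast.length = w.length - 1 := List.length_dropLast
          _ ≤ m := by omega
      · rw [if_neg h]

lemma wsum_pow_zero {α : Type*} [Fintype α] [DecidableEq α] (S : List α → ℝ) (m : ℕ) :
    wsum (shufflePowCoeff S 0) m = if m = 0 then 1 else 0 := by
  cases m with
  | zero => simp [wsum, shufflePowCoeff]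
  | succ m =>
    rw [if_neg (Nat.succ_ne_zero m)]
    apply Finset.sum_eq_zero
    intro f _
    simp [shufflePowCoeff]

lemma wsum_pow_succ {α : Type*} [Fintype α] [DecidableEq α] (S : List α → ℝ) (i m : ℕ) :
    wsum (shufflePowCoeff S (i + 1)) m
      = ∑ j ∈ range (m + 1), (m.choose j : ℝ) * (wsum S j * wsum (shufflePowCoeff S i) (m - j)) :=
  KL m S (shufflePowCoeff S i)

lemma ofFn_snoc {α : Type*} {k : ℕ} (g : Fin k → α) (a : α) :
    List.ofFn (Fin.snoc g a : Fin (k + 1) → α) = List.ofFn g ++ [a] := by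
  rw [List.ofFn_succ']
  simp [List.concat_eq_append]

lemma wsum_F_succ (n : ℕ) (F : List (Fin (n + 1)) → ℝ)
    (hF : ∀ w : List (Fin (n + 1)),
      F w = (if w = [(0 : Fin (n + 1))] then 1 else 0) +
        ∑ i ∈ Finset.univ.erase (0 : Fin (n + 1)),
          (n.choose i.val : ℝ) *
            (if w.getLast? = some i then shufflePowCoeff F i.val w.dropLast else 0))
    (k : ℕ) :
    wsum F (k + 1) = (if k = 0 then 1 else 0)
      + ∑ i ∈ Finset.univ.erase (0 : Fin (n + 1)),
          (n.choose i.val : ℝ) * wsum (shufflePowCoeff F i.val) k := by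
  rw [wsum, ← (Fin.snocEquiv (fun _ : Fin (k + 1) => Fin (n + 1))).sum_comp
    (fun f => F (List.ofFn f)), Fintype.sum_prod_type]
  have step : ∀ a : Fin (n + 1), ∀ g : Fin k → Fin (n + 1),
      F (List.ofFn ((Fin.snocEquiv (fun _ : Fin (k + 1) => Fin (n + 1))) (a, g)))
        = (if (List.ofFn g ++ [a] : List (Fin (n + 1))) = [0] then 1 else 0)
          + ∑ i ∈ Finset.univ.erase (0 : Fin (n + 1)),
              (n.choose i.val : ℝ) * (if a = i then shufflePowCoeff F i.val (List.ofFn g) else 0) := by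
    intro a g
    have he : (Fin.snocEquiv (fun _ : Fin (k + 1) => Fin (n + 1))) (a, g)
        = (Fin.snoc g a : Fin (k + 1) → Fin (n + 1)) := rfl
    rw [he, ofFn_snoc, hF]
    congr 1
    apply Finset.sum_congr rfl
    intro i _
    rw [List.getLast?_concat, List.dropLast_concat]
    simp only [Option.some_inj]
  simp only [step]
  simp only [Finset.sum_add_distrib]
  congr 1
  · cases k with
    | zero =>
      rw [if_pos rfl]
      have : ∀ a : Fin (n + 1), ∀ g : Fin 0 → Fin (n + 1),
          (if (List.ofFn g ++ [a] : List (Fin (n + 1))) = [0] then (1 : ℝ) else 0)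
            = if a = 0 then 1 else 0 := by
        intro a g
        congr 1
        simp [List.ofFn_zero]
      simp only [this]
      simp [Finset.sum_ite_eq']
    | succ k' =>
      rw [if_neg (Nat.succ_ne_zero k')]
      apply Finset.sum_eq_zero
      intro a _
      apply Finset.sum_eq_zero
      intro g _
      rw [if_neg]
      intro h
      have := congrArg List.length h
      simp at this
  · have swap : ∀ a : Fin (n + 1),
        ∑ g : Fin k → Fin (n + 1), ∑ i ∈ Finset.univ.erase (0 : Fin (n + 1)),
            (n.choose i.val : ℝ) * (if a = i then shufflePowCoeff F i.val (List.ofFn g) else 0)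
          = ∑ i ∈ Finset.univ.erase (0 : Fin (n + 1)),
              (if a = i then (n.choose i.val : ℝ) * wsum (shufflePowCoeff F i.val) k else 0) := by
      intro a
      rw [Finset.sum_comm]
      apply Finset.sum_congr rfl
      intro i _
      by_cases h : a = i
      · simp only [if_pos h, wsum, Finset.mul_sum]
      · simp [h]
    simp only [swap]
    rw [Finset.sum_comm]
    apply Finset.sum_congr rfl
    intro i hi
    rw [Finset.sum_ite_eq' Finset.univ i
      (fun _ => (n.choose i.val : ℝ) * wsum (shufflePowCoeff F i.val) k)]
    simp

lemma wsum_F_zero (n : ℕ) (F : List (Fin (n + 1)) → ℝ)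
    (hF : ∀ w : List (Fin (n + 1)),
      F w = (if w = [(0 : Fin (n + 1))] then 1 else 0) +
        ∑ i ∈ Finset.univ.erase (0 : Fin (n + 1)),
          (n.choose i.val : ℝ) *
            (if w.getLast? = some i then shufflePowCoeff F i.val w.dropLast else 0)) :
    wsum F 0 = 0 := by
  rw [wsum_zero, hF []]
  simp

lemma main_count (n : ℕ) (F : List (Fin (n + 1)) → ℝ)
    (hF : ∀ w : List (Fin (n + 1)),
      F w = (if w = [(0 : Fin (n + 1))] then 1 else 0) +
        ∑ i ∈ Finset.univ.erase (0 : Fin (n + 1)),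
          (n.choose i.val : ℝ) *
            (if w.getLast? = some i then shufflePowCoeff F i.val w.dropLast else 0)) :
    ∀ k, wsum F k = Pp ((n : ℝ) - 1) 1 k - (if k = 0 then 1 else 0) := by
  intro k
  induction k using Nat.strong_induction_on with
  | _ k ih =>
    match k with
    | 0 =>
      rw [wsum_F_zero n F hF]
      simp [Pp_zero_right]
    | (m + 1) =>
      set c : ℝ := (n : ℝ) - 1 with hc
      have pow_eq : ∀ (i : ℕ) (k' : ℕ), k' ≤ m → wsum (shufflePowCoeff F i) k' = qq c i k' := by
        intro i
        induction i with
        | zero => intro k' _; rw [wsum_pow_zero, q_zero]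
        | succ i ihh =>
          intro k' hk'
          rw [wsum_pow_succ, ← q_conv c i k']
          apply Finset.sum_congr rfl
          intro j hj
          have hj' : j ≤ k' := Nat.lt_add_one_iff.mp (Finset.mem_range.mp hj)
          rw [ih j (by omega), ihh (k' - j) (by omega)]
      rw [wsum_F_succ n F hF m]
      have conv : ∑ i ∈ Finset.univ.erase (0 : Fin (n + 1)),
            (n.choose i.val : ℝ) * wsum (shufflePowCoeff F i.val) m
          = ∑ i ∈ Finset.univ.erase (0 : Fin (n + 1)), (n.choose i.val : ℝ) * qq c i.val m := by
        apply Finset.sum_congr rfl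
        intro i _
        rw [pow_eq i.val m le_rfl]
      rw [conv]
      have h2 := Finset.sum_erase_add Finset.univ
        (fun i : Fin (n + 1) => (n.choose i.val : ℝ) * qq c i.val m) (Finset.mem_univ 0)
      have h1 : ∑ i : Fin (n + 1), (n.choose i.val : ℝ) * qq c i.val m
          = ∑ i ∈ range (n + 1), (n.choose i : ℝ) * qq c i m :=
        Fin.sum_univ_eq_sum_range (fun i => (n.choose i : ℝ) * qq c i m) (n + 1)
      have toRange : ∑ i ∈ Finset.univ.erase (0 : Fin (n + 1)),
            (n.choose i.val : ℝ) * qq c i.val m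
          = ∑ i ∈ range (n + 1), (n.choose i : ℝ) * qq c i m
            - (n.choose 0 : ℝ) * qq c 0 m := by
        rw [← h1]
        have : ((0 : Fin (n + 1)) : ℕ) = 0 := rfl
        simp only [this] at h2
        linarith [h2]
      rw [toRange, C_sum c n m, q_zero]
      have hn : ((n : ℕ) : ℝ) = c + 1 := by rw [hc]; ring
      rw [hn, ← Pp_shift c m]
      rw [if_neg (Nat.succ_ne_zero m)]
      simp [Nat.choose_zero_right]

end Stmt10Aux

open Finset Stmt10Aux in
/-- If `F` is the solution of `F = a_0 + ∑_{i=1}^n C(n,i)·F^{⧢ i}·a_i` on the alphabet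
`Fin (n+1)`, then the total coefficient mass of its degree-`k` homogeneous part
`‖F_k‖ = ∑_{|w| = k} |⟨F,w⟩|` equals `∏_{j=0}^{k-1}((n-1)j+1)` for `k ≥ 1`, `‖F_1‖ = 1`,
`‖F_0‖ = 0`; in particular `‖F_k‖ = k!` for `n = 2` and `‖F_k‖ = (2k-1)!!` for `n = 3`. -/
theorem stmt10 (n : ℕ) (F : List (Fin (n + 1)) → ℝ)
    (hF : ∀ w : List (Fin (n + 1)),
      F w = (if w = [(0 : Fin (n + 1))] then 1 else 0) +
        ∑ i ∈ Finset.univ.erase (0 : Fin (n + 1)),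
          (n.choose i.val : ℝ) *
            (if w.getLast? = some i then shufflePowCoeff F i.val w.dropLast else 0)) :
    (∑ f : Fin 0 → Fin (n + 1), |F (List.ofFn f)|) = 0 ∧
    (∑ f : Fin 1 → Fin (n + 1), |F (List.ofFn f)|) = 1 ∧
    (∀ k : ℕ, 1 ≤ k →
      (∑ f : Fin k → Fin (n + 1), |F (List.ofFn f)|)
        = ∏ j ∈ Finset.range k, (((n : ℝ) - 1) * j + 1)) ∧
    (n = 2 → ∀ k : ℕ, 1 ≤ k →
      (∑ f : Fin k → Fin (n + 1), |F (List.ofFn f)|) = (k.factorial : ℝ)) ∧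
    (n = 3 → ∀ k : ℕ, 1 ≤ k →
      (∑ f : Fin k → Fin (n + 1), |F (List.ofFn f)|) = ((2 * k - 1).doubleFactorial : ℝ)) := by
  have habs : ∀ k : ℕ, (∑ f : Fin k → Fin (n + 1), |F (List.ofFn f)|) = wsum F k := by
    intro k
    rw [wsum]
    exact Finset.sum_congr rfl fun f _ => abs_of_nonneg (F_nonneg n F hF _)
  have hprod : ∀ k : ℕ, 1 ≤ k →
      (∑ f : Fin k → Fin (n + 1), |F (List.ofFn f)|)
        = ∏ j ∈ Finset.range k, (((n : ℝ) - 1) * j + 1) := by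
    intro k hk
    rw [habs k, main_count n F hF k, if_neg (by omega), sub_zero]
    rfl
  refine ⟨?_, ?_, hprod, ?_, ?_⟩
  · rw [habs 0, wsum_F_zero n F hF]
  · rw [habs 1, main_count n F hF 1, if_neg one_ne_zero, sub_zero]
    simp [Pp]
  · rintro rfl k hk
    rw [hprod k hk]
    have : ∀ j ∈ Finset.range k, (((2 : ℕ) : ℝ) - 1) * j + 1 = ((j + 1 : ℕ) : ℝ) := by
      intro j _
      push_cast
      ring
    rw [Finset.prod_congr rfl this, ← Nat.cast_prod, Finset.prod_range_add_one_eq_factorial]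
  · rintro rfl k hk
    obtain ⟨m, rfl⟩ : ∃ m, k = m + 1 := ⟨k - 1, by omega⟩
    rw [hprod (m + 1) hk]
    have : ∀ j ∈ Finset.range (m + 1), (((3 : ℕ) : ℝ) - 1) * j + 1 = ((2 * j + 1 : ℕ) : ℝ) := by
      intro j _
      push_cast
      ring
    rw [Finset.prod_congr rfl this, ← Nat.cast_prod]
    have hprodnat : ∏ j ∈ Finset.range (m + 1), (2 * j + 1) = (2 * m + 1).doubleFactorial := by
      rw [Finset.prod_range_succ' (fun j => 2 * j + 1), Nat.doubleFactorial_eq_prod_odd m]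
      simp [mul_comm]
    rw [hprodnat, show 2 * (m + 1) - 1 = 2 * m + 1 by omega]
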